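/- Let G be a locally compact Hausdorff topological group. For every neighborhood U of the identity and every compact set C ⊆ G there exist a finite set F ⊆ G and a family of subsets {A_{g,h} ⊆ F : g,h ∈ F} satisfying: (1) C ⊆ FU; (2) if g,h ∈ C ∩ F then A_{g,h} ⊆ ghU; (3) for every g ∈ F and every subset S ⊆ F, the cardinality of ⋃_{h∈S} A_{g,h} is at least the cardinality of S. -/

import Mathlib

open Pointwise

/-- The key combinatorial lemma: for every neighborhood `U` of the identity
and every compact `C` in a locally compact group there are a finite set `F`
and a family `A_{g,h} ⊆ F` such that `F` is a `U`-grid of `C`, `A_{g,h} ⊆ ghU`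
for `g, h ∈ C ∩ F`, and the Hall condition holds. -/
theorem stmt_11 {G : Type*} [Group G] [TopologicalSpace G] [IsTopologicalGroup G]
    [LocallyCompactSpace G] [T2Space G] [DecidableEq G]
    (U : Set G) (hU : U ∈ nhds (1 : G)) (C : Set G) (hC : IsCompact C) :
    ∃ (F : Finset G) (Afam : G → G → Finset G),
      (∀ g h : G, Afam g h ⊆ F) ∧
      C ⊆ ↑F * U ∧
      (∀ g h : G, g ∈ C → g ∈ F → h ∈ C → h ∈ F →
        (↑(Afam g h) : Set G) ⊆ (g * h) • U) ∧
      (∀ g ∈ F, ∀ S ⊆ F, S.card ≤ (S.biUnion fun h => Afam g h).card) := by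
  classical
  -- Step 1: a small symmetric open neighborhood V of 1 inside a compact set,
  -- such that sixfold products of V lie in U.
  obtain ⟨V₁, hV₁o, hV₁1, hV₁U⟩ := exists_open_nhds_one_mul_subset hU
  obtain ⟨V₂, hV₂o, hV₂1, hV₂U⟩ :=
    exists_open_nhds_one_mul_subset (hV₁o.mem_nhds hV₁1)
  obtain ⟨V₃, hV₃o, hV₃1, hV₃U⟩ :=
    exists_open_nhds_one_mul_subset (hV₂o.mem_nhds hV₂1)
  obtain ⟨K₀, hK₀c, hK₀n⟩ := exists_compact_mem_nhds (1 : G)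
  set V₀ : Set G := V₃ ∩ interior K₀ with hV₀def
  have hV₀o : IsOpen V₀ := hV₃o.inter isOpen_interior
  have hV₀1 : (1 : G) ∈ V₀ := ⟨hV₃1, mem_interior_iff_mem_nhds.2 hK₀n⟩
  set V : Set G := V₀ ∩ V₀⁻¹ with hVdef
  have hVo : IsOpen V := hV₀o.inter hV₀o.inv
  have hV1 : (1 : G) ∈ V := ⟨hV₀1, by simpa using hV₀1⟩
  have hVsymm : ∀ v ∈ V, v⁻¹ ∈ V := by
    rintro v ⟨hv1, hv2⟩
    exact ⟨by simpa using hv2, by simpa using hv1⟩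
  have hVV₃ : V ⊆ V₃ := fun v hv => hv.1.1
  have hVK₀ : V ⊆ K₀ := fun v hv => interior_subset hv.1.2
  have hV₃V₂ : V₃ ⊆ V₂ := fun v hv => by
    simpa using hV₃U (Set.mul_mem_mul hv hV₃1)
  have hVV₂ : V ⊆ V₂ := fun v hv => hV₃V₂ (hVV₃ hv)
  -- sixfold products of V lie in U
  have hU6 : ∀ v₁ ∈ V, ∀ v₂ ∈ V, ∀ v₃ ∈ V, ∀ v₄ ∈ V, ∀ v₅ ∈ V, ∀ v₆ ∈ V,
      v₁ * v₂ * v₃ * v₄ * v₅ * v₆ ∈ U := by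
    intro v₁ h1 v₂ h2 v₃ h3 v₄ h4 v₅ h5 v₆ h6
    have p12 : v₁ * v₂ ∈ V₂ := hV₃U (Set.mul_mem_mul (hVV₃ h1) (hVV₃ h2))
    have p34 : v₃ * v₄ ∈ V₂ := hV₃U (Set.mul_mem_mul (hVV₃ h3) (hVV₃ h4))
    have p56 : v₅ * v₆ ∈ V₂ := hV₃U (Set.mul_mem_mul (hVV₃ h5) (hVV₃ h6))
    have p14 : v₁ * v₂ * (v₃ * v₄) ∈ V₁ := hV₂U (Set.mul_mem_mul p12 p34)
    have p56' : v₅ * v₆ ∈ V₁ := by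
      simpa using hV₂U (Set.mul_mem_mul p56 hV₂1)
    have hfin : v₁ * v₂ * (v₃ * v₄) * (v₅ * v₆) ∈ U := hV₁U (Set.mul_mem_mul p14 p56')
    have e : v₁ * v₂ * v₃ * v₄ * v₅ * v₆ = v₁ * v₂ * (v₃ * v₄) * (v₅ * v₆) := by group
    rw [e]
    exact hfin
  -- the basic "grid scale" set W = V*V*V
  set W : Set G := V * V * V with hWdef
  have hWo : IsOpen W := hVo.mul_left
  have hW1 : (1 : G) ∈ W := by
    have := Set.mul_mem_mul (Set.mul_mem_mul hV1 hV1) hV1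
    simpa using this
  have hWmem : ∀ {w : G}, w ∈ W → ∃ v₁ ∈ V, ∃ v₂ ∈ V, ∃ v₃ ∈ V, v₁ * v₂ * v₃ = w := by
    intro w hw
    obtain ⟨y, ⟨v₁, h1, v₂, h2, rfl⟩, v₃, h3, rfl⟩ := hw
    exact ⟨v₁, h1, v₂, h2, v₃, h3, rfl⟩
  have hWintro : ∀ v₁ ∈ V, ∀ v₂ ∈ V, ∀ v₃ ∈ V, v₁ * v₂ * v₃ ∈ W :=
    fun v₁ h1 v₂ h2 v₃ h3 => Set.mul_mem_mul (Set.mul_mem_mul h1 h2) h3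
  have hWsymm : ∀ w ∈ W, w⁻¹ ∈ W := by
    intro w hw
    obtain ⟨v₁, h1, v₂, h2, v₃, h3, rfl⟩ := hWmem hw
    have e : (v₁ * v₂ * v₃)⁻¹ = v₃⁻¹ * v₂⁻¹ * v₁⁻¹ := by group
    rw [e]
    exact hWintro _ (hVsymm _ h3) _ (hVsymm _ h2) _ (hVsymm _ h1)
  have hWU : W ⊆ U := by
    intro w hw
    obtain ⟨v₁, h1, v₂, h2, v₃, h3, rfl⟩ := hWmem hw
    have := hU6 v₁ h1 v₂ h2 v₃ h3 1 hV1 1 hV1 1 hV1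
    simpa using this
  have hWWU : W * W ⊆ U := by
    rintro x ⟨w₁, hw₁, w₂, hw₂, rfl⟩
    obtain ⟨v₁, h1, v₂, h2, v₃, h3, rfl⟩ := hWmem hw₁
    obtain ⟨v₄, h4, v₅, h5, v₆, h6, rfl⟩ := hWmem hw₂
    have h6U := hU6 v₁ h1 v₂ h2 v₃ h3 v₄ h4 v₅ h5 v₆ h6
    have e : v₁ * v₂ * v₃ * v₄ * v₅ * v₆ = v₁ * v₂ * v₃ * (v₄ * v₅ * v₆) := by group
    rw [e] at h6U
    exact h6U
  have hWK : W ⊆ K₀ * K₀ * K₀ := by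
    intro w hw
    obtain ⟨v₁, h1, v₂, h2, v₃, h3, rfl⟩ := hWmem hw
    exact Set.mul_mem_mul (Set.mul_mem_mul (hVK₀ h1) (hVK₀ h2)) (hVK₀ h3)
  -- the compact set D that we cover minimally
  set D : Set G := C ∪ C * C * (K₀ * K₀ * K₀) with hDdef
  have hDc : IsCompact D := hC.union ((hC.mul hC).mul ((hK₀c.mul hK₀c).mul hK₀c))
  have hCD : C ⊆ D := Set.subset_union_left
  -- existence of a finite cover of D by left translates of W
  have hexcov : ∃ n : ℕ, ∃ F : Finset G, F.card = n ∧ D ⊆ ↑F * W := by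
    obtain ⟨t, -, ht⟩ := hDc.elim_nhds_subcover (fun x => x • W)
      (fun x _ => (hWo.smul x).mem_nhds (Set.mem_smul_set.2 ⟨1, hW1, mul_one x⟩))
    refine ⟨t.card, t, rfl, fun x hx => ?_⟩
    obtain ⟨y, hy, hxy⟩ := Set.mem_iUnion₂.1 (ht hx)
    obtain ⟨w, hw, rfl⟩ := Set.mem_smul_set.1 hxy
    exact ⟨y, by simpa using hy, w, hw, rfl⟩
  -- a minimum-cardinality cover F of D by translates of W
  obtain ⟨F, hFcard, hFcov⟩ := Nat.find_spec hexcov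
  -- the family
  set Afam : G → G → Finset G := fun g h =>
    if g ∈ C ∧ h ∈ C then F.filter (fun f => f ∈ (g * h) • (W * W)) else F with hAdef
  have hA_pos : ∀ {g h : G}, g ∈ C → h ∈ C →
      Afam g h = F.filter (fun f => f ∈ (g * h) • (W * W)) := by
    intro g h hg hh
    simp only [hAdef]
    rw [if_pos ⟨hg, hh⟩]
  have hA_neg : ∀ {g h : G}, ¬(g ∈ C ∧ h ∈ C) → Afam g h = F := by
    intro g h hc
    simp only [hAdef]
    rw [if_neg hc]
  have hAsub : ∀ g h : G, Afam g h ⊆ F := by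
    intro g h
    by_cases hc : g ∈ C ∧ h ∈ C
    · rw [hA_pos hc.1 hc.2]; exact Finset.filter_subset _ _
    · rw [hA_neg hc]
  refine ⟨F, Afam, hAsub, ?_, ?_, ?_⟩
  · -- C ⊆ F * U
    intro x hx
    obtain ⟨f, hf, w, hw, rfl⟩ := hFcov (hCD hx)
    exact ⟨f, hf, w, hWU hw, rfl⟩
  · -- A_{g,h} ⊆ ghU for g, h ∈ C ∩ F
    intro g h hgC hgF hhC hhF
    intro f hf
    rw [Finset.mem_coe, hA_pos hgC hhC, Finset.mem_filter] at hf
    exact Set.smul_set_mono hWWU hf.2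
  · -- Hall condition
    intro g hgF S hSF
    by_cases hgC : g ∈ C
    · by_cases hSC : ∀ h ∈ S, h ∈ C
      · -- the main case: use minimality of the cover
        by_contra hlt
        push_neg at hlt
        set T : Finset G := S.biUnion (fun h => Afam g h) with hTdef
        -- the smaller cover
        set F' : Finset G := (F \ S) ∪ T.image (fun f => g⁻¹ * f) with hF'def
        have hF'cov : D ⊆ ↑F' * W := by
          intro x hx
          obtain ⟨f, hf, w, hw, hfwx0⟩ := hFcov hx
          have hfwx : f * w = x := hfwx0
          rw [Finset.mem_coe] at hf
          by_cases hfS : f ∈ S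
          · have hfC : f ∈ C := hSC f hfS
            have hgx : g * x ∈ D := by
              refine Or.inr ?_
              have : (g * f) * w ∈ C * C * (K₀ * K₀ * K₀) :=
                Set.mul_mem_mul (Set.mul_mem_mul hgC hfC) (hWK hw)
              have hgfw : g * f * w = g * x := by rw [← hfwx]; group
              rwa [hgfw] at this
            obtain ⟨f₂, hf₂, w₂, hw₂, hf₂w₂0⟩ := hFcov hgx
            have hf₂w₂ : f₂ * w₂ = g * x := hf₂w₂0
            rw [Finset.mem_coe] at hf₂
            have hf₂A : f₂ ∈ Afam g f := by
              have hmem : f₂ ∈ (g * f) • (W * W) := by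
                refine Set.mem_smul_set.2
                  ⟨w * w₂⁻¹, Set.mul_mem_mul hw (hWsymm _ hw₂), ?_⟩
                have hx1 : f₂ * w₂ = g * x := hf₂w₂
                have hx2 : g * f * w = g * x := by rw [← hfwx]; group
                simp only [smul_eq_mul]
                calc g * f * (w * w₂⁻¹) = (g * f * w) * w₂⁻¹ := by group
                  _ = (f₂ * w₂) * w₂⁻¹ := by rw [hx2, ← hx1]
                  _ = f₂ := by group
              rw [hA_pos hgC hfC, Finset.mem_filter]
              exact ⟨hf₂, hmem⟩
            have hf₂T : f₂ ∈ T := Finset.mem_biUnion.2 ⟨f, hfS, hf₂A⟩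
            refine ⟨g⁻¹ * f₂, ?_, w₂, hw₂, ?_⟩
            · rw [Finset.mem_coe, hF'def]
              exact Finset.mem_union_right _ (Finset.mem_image.2 ⟨f₂, hf₂T, rfl⟩)
            · calc g⁻¹ * f₂ * w₂ = g⁻¹ * (f₂ * w₂) := by group
                _ = g⁻¹ * (g * x) := by rw [hf₂w₂]
                _ = x := by group
          · refine ⟨f, ?_, w, hw, hfwx⟩
            rw [Finset.mem_coe, hF'def]
            exact Finset.mem_union_left _ (Finset.mem_sdiff.2 ⟨hf, hfS⟩)
        have hF'card : F'.card < Nat.find hexcov := by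
          have h1 : F'.card ≤ (F \ S).card + (T.image (fun f => g⁻¹ * f)).card :=
            Finset.card_union_le _ _
          have h2 : (F \ S).card = F.card - S.card := Finset.card_sdiff_of_subset hSF
          have h3 : (T.image (fun f => g⁻¹ * f)).card ≤ T.card := Finset.card_image_le
          have h4 : S.card ≤ F.card := Finset.card_le_card hSF
          have h5 : T.card < S.card := hlt
          omega
        exact Nat.find_min hexcov hF'card ⟨F', rfl, hF'cov⟩
      · -- some h₀ ∈ S is not in C : then the union is all of F
        push_neg at hSC
        obtain ⟨h₀, hh₀S, hh₀C⟩ := hSC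
        have hFT : F ⊆ S.biUnion (fun h => Afam g h) := by
          intro f hf
          refine Finset.mem_biUnion.2 ⟨h₀, hh₀S, ?_⟩
          rw [hA_neg (fun hc => hh₀C hc.2)]
          exact hf
        exact le_trans (Finset.card_le_card hSF) (Finset.card_le_card hFT)
    · -- g ∉ C : the union is all of F (if S is nonempty)
      rcases S.eq_empty_or_nonempty with rfl | ⟨h₀, hh₀S⟩
      · simp
      · have hFT : F ⊆ S.biUnion (fun h => Afam g h) := by
          intro f hf
          refine Finset.mem_biUnion.2 ⟨h₀, hh₀S, ?_⟩
          rw [hA_neg (fun hc => hgC hc.1)]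
          exact hf
        exact le_trans (Finset.card_le_card hSF) (Finset.card_le_card hFT)
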